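/- If α is a strong composition such that κ_α is not multiplicity free (there exist two distinct quasi-Yamanouchi Kohnert tableaux of content α with equal weight), and a is any weak composition with flat(a) = α, then κ_a is not multiplicity free. -/

import Mathlib

/-- `b` dominates `a`: every partial sum of `b` is at least that of `a`. -/
def Dominates (b a : List ℕ) : Prop :=
  ∀ i : ℕ, (a.take i).sum ≤ (b.take i).sum

/-- `flatten a` removes the zero parts of a weak composition. -/
def Flatten (a : List ℕ) : List ℕ := a.filter (· != 0)

/-- `β` refines `α`: `β` decomposes into consecutive nonempty blocks whose sums give `α`. -/
def Refines (β α : List ℕ) : Prop :=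
  ∃ L : List (List ℕ), (∀ l ∈ L, l ≠ []) ∧ L.flatten = β ∧ L.map List.sum = α

/-- The set of inversions of a composition: pairs `i < j` with `α i < α j`. -/
def invSet (α : List ℕ) : Finset (Fin α.length × Fin α.length) :=
  Finset.univ.filter fun p => p.1 < p.2 ∧ α.get p.1 < α.get p.2

/-- Kohnert tableau of content `a`, encoded as a filling `T : (row, col) → entry`,
with `0` meaning an empty position, rows and columns indexed from `1`. -/
def IsKohnert (a : List ℕ) (T : ℕ × ℕ → ℕ) : Prop :=
  -- cells live at positive coordinates
  (∀ r c, T (r, c) ≠ 0 → 1 ≤ r ∧ 1 ≤ c) ∧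
  -- entries are among 1,…,ℓ
  (∀ r c, T (r, c) ≠ 0 → 1 ≤ T (r, c) ∧ T (r, c) ≤ a.length) ∧
  -- (i) for each i there is exactly one i in each column 1,…,aᵢ and none beyond
  (∀ i, 1 ≤ i → i ≤ a.length → ∀ c, 1 ≤ c →
    (c ≤ a.getD (i - 1) 0 → ∃! r, T (r, c) = i) ∧
    (a.getD (i - 1) 0 < c → ∀ r, T (r, c) ≠ i)) ∧
  -- (ii) each entry in row r is at least r
  (∀ r c, T (r, c) ≠ 0 → r ≤ T (r, c)) ∧
  -- (iii) the cells filled with a given entry weakly descend from left to right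
  (∀ r c r' c', T (r, c) ≠ 0 → T (r, c) = T (r', c') → c < c' → r' ≤ r) ∧
  -- (iv) if i < j share a column with i above j, there is an i in the next column,
  -- strictly above the cell containing j
  (∀ r r' c, T (r, c) ≠ 0 → T (r', c) ≠ 0 → T (r, c) < T (r', c) → r' < r →
    ∃ r'', r' < r'' ∧ T (r'', c + 1) = T (r, c))

/-- Quasi-Yamanouchi Kohnert tableau: additionally (v) every nonempty row `r` contains
the entry `r`, or has a cell in row `r+1` weakly right of one of its cells. -/
def IsQYKohnert (a : List ℕ) (T : ℕ × ℕ → ℕ) : Prop :=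
  IsKohnert a T ∧
  ∀ r, 1 ≤ r → (∃ c, T (r, c) ≠ 0) →
    ((∃ c, T (r, c) = r) ∨ ∃ c c', T (r, c) ≠ 0 ∧ T (r + 1, c') ≠ 0 ∧ c ≤ c')

/-- The weight of a filling: the list recording the number of cells in each row `1,…,ℓ`. -/
def wtList (a : List ℕ) (T : ℕ × ℕ → ℕ) : List ℕ :=
  (List.range a.length).map fun r =>
    ((Finset.Icc 1 a.sum).filter fun c => T (r + 1, c) ≠ 0).card

open Classical in
/-- Coefficient of the monomial `x^b` in the fundamental slide polynomial `𝔉_a`. -/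
noncomputable def fundCoeff (a b : List ℕ) : ℕ :=
  if b.length = a.length ∧ Dominates b a ∧ Refines (Flatten b) (Flatten a) then 1 else 0

/-- Coefficient of the monomial `x^b` in the key polynomial `κ_a`:
the number of Kohnert tableaux of content `a` and weight `b`. -/
noncomputable def keyCoeff (a b : List ℕ) : ℕ :=
  Set.ncard {T : ℕ × ℕ → ℕ | IsKohnert a T ∧ wtList a T = b}

/-- The basic filling of content `a`: `aᵢ` cells filled with `i` in row `i`, columns `1,…,aᵢ`. -/
def basicFilling (a : List ℕ) : ℕ × ℕ → ℕ := fun p =>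
  if 1 ≤ p.1 ∧ p.1 ≤ a.length ∧ 1 ≤ p.2 ∧ p.2 ≤ a.getD (p.1 - 1) 0 then p.1 else 0

/-- `κ_α` is multiplicity free in the fundamental slide basis: quasi-Yamanouchi
Kohnert tableaux of content `α` have pairwise distinct weights. -/
def MultFree (α : List ℕ) : Prop :=
  ∀ T₁ T₂ : ℕ × ℕ → ℕ, IsQYKohnert α T₁ → IsQYKohnert α T₂ →
    wtList α T₁ = wtList α T₂ → T₁ = T₂
namespace S18

def sh (k x : ℕ) : ℕ := if x ≤ k then x else x + 1
def ush (k x : ℕ) : ℕ := if x ≤ k then x else x - 1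

lemma sh_eq_zero {k x : ℕ} : sh k x = 0 ↔ x = 0 := by unfold sh; split <;> omega
lemma sh_le_sh {k x y : ℕ} (h : x ≤ y) : sh k x ≤ sh k y := by
  unfold sh; split <;> split <;> omega
lemma sh_lt_sh {k x y : ℕ} : sh k x < sh k y ↔ x < y := by
  unfold sh; split <;> split <;> omega
lemma sh_inj {k x y : ℕ} (h : sh k x = sh k y) : x = y := by
  unfold sh at h; split at h <;> split at h <;> omega
lemma sh_ne {k x : ℕ} : sh k x ≠ k + 1 := by unfold sh; split <;> omega
lemma ush_sh (k x : ℕ) : ush k (sh k x) = x := by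
  by_cases h : x ≤ k
  · rw [sh, if_pos h, ush, if_pos h]
  · rw [sh, if_neg h, ush, if_neg (by omega : ¬ x + 1 ≤ k)]
    omega
lemma sh_ush {k y : ℕ} (h : y ≠ k + 1) : sh k (ush k y) = y := by
  by_cases h2 : y ≤ k
  · rw [ush, if_pos h2, sh, if_pos h2]
  · rw [ush, if_neg h2, sh, if_neg (by omega : ¬ y - 1 ≤ k)]; omega
lemma le_sh (k x : ℕ) : x ≤ sh k x := by unfold sh; split <;> omega
lemma ush_pos {k y : ℕ} (h1 : 1 ≤ y) (h2 : y ≠ k + 1) : 1 ≤ ush k y := by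
  unfold ush; split <;> omega

def liftT (k : ℕ) (T : ℕ × ℕ → ℕ) : ℕ × ℕ → ℕ :=
  fun p => if p.1 = k + 1 then 0 else sh k (T (ush k p.1, p.2))

lemma liftT_ne_zero {k : ℕ} {T : ℕ × ℕ → ℕ} {r c : ℕ} :
    liftT k T (r, c) ≠ 0 ↔ r ≠ k + 1 ∧ T (ush k r, c) ≠ 0 := by
  unfold liftT
  split <;> simp_all [sh_eq_zero]

lemma liftT_sh (k : ℕ) (T : ℕ × ℕ → ℕ) (r c : ℕ) :
    liftT k T (sh k r, c) = sh k (T (r, c)) := by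
  unfold liftT
  simp [sh_ne, ush_sh]

def RowGood (T : ℕ × ℕ → ℕ) : Prop :=
  ∀ r, 1 ≤ r → (∃ c, T (r, c) ≠ 0) → ∃ c, T (r, c) = r

def GoodHyp (a : List ℕ) : Prop :=
  ∃ T₁ T₂ : ℕ × ℕ → ℕ, (IsKohnert a T₁ ∧ RowGood T₁) ∧ (IsKohnert a T₂ ∧ RowGood T₂) ∧
    T₁ ≠ T₂ ∧ wtList a T₁ = wtList a T₂

/-- column 1 of a Kohnert tableau of strong content is the basic filling -/
lemma col1 (α : List ℕ) (hpos : ∀ x ∈ α, 0 < x) (T : ℕ × ℕ → ℕ) (hT : IsKohnert α T) :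
    ∀ i, 1 ≤ i → i ≤ α.length → T (i, 1) = i := by
  obtain ⟨h0, h1, hi, hii, -, -⟩ := hT
  intro i
  induction i using Nat.strong_induction_on with
  | _ i IH =>
    intro h1i hil
    have hlt : i - 1 < α.length := by omega
    have hα : 1 ≤ α.getD (i - 1) 0 := by
      rw [List.getD_eq_getElem α 0 hlt]
      exact hpos _ (List.getElem_mem hlt)
    obtain ⟨r, hr, hru⟩ := (hi i h1i hil 1 le_rfl).1 hα
    have hr2 : T (r, 1) = i := hr
    have hrne : T (r, 1) ≠ 0 := by omega
    have hr1 : 1 ≤ r := (h0 r 1 hrne).1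
    have hri : r ≤ i := by have := hii r 1 hrne; omega
    rcases eq_or_lt_of_le hri with rfl | hlt'
    · exact hr2
    · have := IH r hlt' hr1 (by omega)
      omega

lemma rowGood_of_strong (α : List ℕ) (hpos : ∀ x ∈ α, 0 < x) (T : ℕ × ℕ → ℕ)
    (hT : IsKohnert α T) : RowGood T := by
  rintro r hr ⟨c, hc⟩
  have h2 := hT.2.1 r c hc
  have h3 := hT.2.2.2.1 r c hc
  exact ⟨1, col1 α hpos T hT r hr (by omega)⟩

lemma lift_rowGood (k : ℕ) (T : ℕ × ℕ → ℕ) (hG : RowGood T) : RowGood (liftT k T) := by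
  rintro r hr ⟨c, hc⟩
  rw [liftT_ne_zero] at hc
  obtain ⟨hrk, hc⟩ := hc
  obtain ⟨c', hc'⟩ := hG (ush k r) (ush_pos hr hrk) ⟨c, hc⟩
  refine ⟨c', ?_⟩
  unfold liftT
  rw [if_neg hrk, hc', sh_ush hrk]

lemma lift_inj {T₁ T₂ : ℕ × ℕ → ℕ} (k : ℕ) (h : liftT k T₁ = liftT k T₂) : T₁ = T₂ := by
  funext p
  obtain ⟨r, c⟩ := p
  have := congrFun h (sh k r, c)
  rw [liftT_sh, liftT_sh] at this
  exact sh_inj this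

lemma wt_eq_iff (a : List ℕ) (T₁ T₂ : ℕ × ℕ → ℕ) :
    wtList a T₁ = wtList a T₂ ↔ ∀ j < a.length,
      ((Finset.Icc 1 a.sum).filter fun c => T₁ (j + 1, c) ≠ 0).card =
      ((Finset.Icc 1 a.sum).filter fun c => T₂ (j + 1, c) ≠ 0).card := by
  unfold wtList
  rw [List.map_inj_left]
  simp

section Lift
variable (u v : List ℕ)

lemma getD_ins (j : ℕ) :
    (u ++ 0 :: v).getD (sh u.length (j + 1) - 1) 0 = (u ++ v).getD j 0 := by
  rcases lt_or_ge j u.length with hj | hj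
  · have e : sh u.length (j + 1) - 1 = j := by unfold sh; split <;> omega
    rw [e]
    simp [List.getD_eq_getElem?_getD, List.getElem?_append, hj]
  · have e : sh u.length (j + 1) - 1 = j + 1 := by unfold sh; split <;> omega
    rw [e]
    rw [List.getD_eq_getElem?_getD, List.getElem?_append_right (by omega : u.length ≤ j + 1),
      List.getD_eq_getElem?_getD, List.getElem?_append_right hj]
    rw [show j + 1 - u.length = (j - u.length) + 1 by omega]
    simp

lemma getD_ins_k : (u ++ 0 :: v).getD u.length 0 = 0 := by
  rw [List.getD_eq_getElem?_getD, List.getElem?_append_right (le_refl _)]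
  simp

lemma len_ins : (u ++ 0 :: v).length = (u ++ v).length + 1 := by
  simp only [List.length_append, List.length_cons]
  omega

lemma sum_ins : (u ++ 0 :: v).sum = (u ++ v).sum := by simp

lemma lift_kohnert (T : ℕ × ℕ → ℕ) (hT : IsKohnert (u ++ v) T) :
    IsKohnert (u ++ 0 :: v) (liftT u.length T) := by
  obtain ⟨h0, h1, hi, hii, hiii, hiv⟩ := hT
  refine ⟨?_, ?_, ?_, ?_, ?_, ?_⟩
  · -- positivity of coordinates
    intro r c hc
    rw [liftT_ne_zero] at hc
    obtain ⟨hr, hc⟩ := hc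
    have hp := (h0 _ _ hc).1
    refine ⟨?_, (h0 _ _ hc).2⟩
    calc 1 ≤ ush u.length r := hp
      _ ≤ sh u.length (ush u.length r) := le_sh _ _
      _ = r := sh_ush hr
  · -- entry bounds
    intro r c hc
    rw [liftT_ne_zero] at hc
    obtain ⟨hr, hc⟩ := hc
    have h2 := h1 _ _ hc
    have e : liftT u.length T (r, c) = sh u.length (T (ush u.length r, c)) := by
      unfold liftT; simp [hr]
    rw [e, len_ins]
    refine ⟨le_trans h2.1 (le_sh _ _), ?_⟩
    have h22 := h2.2
    unfold sh; split <;> omega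
  · -- condition (i)
    intro i h1i hil c h1c
    rw [len_ins] at hil
    by_cases hik : i = u.length + 1
    · subst hik
      rw [show u.length + 1 - 1 = u.length by omega, getD_ins_k]
      constructor
      · intro hc0
        exact absurd hc0 (by omega)
      · intro _ r
        unfold liftT
        split
        · omega
        · exact sh_ne
    · have h1j : 1 ≤ ush u.length i := ush_pos h1i hik
      have hsj : sh u.length (ush u.length i) = i := sh_ush hik
      have hjl : ush u.length i ≤ (u ++ v).length := by
        unfold ush
        simp only [List.length_append] at hil ⊢
        split <;> omega
      have hgd : (u ++ 0 :: v).getD (i - 1) 0 = (u ++ v).getD (ush u.length i - 1) 0 := by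
        have h2 : sh u.length ((ush u.length i - 1) + 1) = i := by
          rw [show ush u.length i - 1 + 1 = ush u.length i by omega, hsj]
        rw [← getD_ins u v (ush u.length i - 1), h2]
      rw [hgd]
      constructor
      · intro hc
        obtain ⟨r₀, hr₀, hr₀u⟩ := (hi _ h1j hjl c h1c).1 hc
        have hr₀2 : T (r₀, c) = ush u.length i := hr₀
        refine ⟨sh u.length r₀, ?_, ?_⟩
        · show liftT u.length T (sh u.length r₀, c) = i
          rw [liftT_sh, hr₀2, hsj]
        · intro r hr
          have hr2 : liftT u.length T (r, c) = i := hr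
          have hrk : r ≠ u.length + 1 := by
            intro hh; rw [hh] at hr2; unfold liftT at hr2; simp at hr2; omega
          have e2 : sh u.length (T (ush u.length r, c)) = i := by
            unfold liftT at hr2; rw [if_neg hrk] at hr2; exact hr2
          rw [← hsj] at e2
          have e3 := hr₀u _ (sh_inj e2)
          rw [← e3, sh_ush hrk]
      · intro hc r hr
        have hrk : r ≠ u.length + 1 := by
          intro hh; rw [hh] at hr; unfold liftT at hr; simp at hr; omega
        have e2 : sh u.length (T (ush u.length r, c)) = i := by
          unfold liftT at hr; rw [if_neg hrk] at hr; exact hr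
        rw [← hsj] at e2
        exact (hi _ h1j hjl c h1c).2 hc (ush u.length r) (sh_inj e2)
  · -- condition (ii)
    intro r c hc
    rw [liftT_ne_zero] at hc
    obtain ⟨hr, hc⟩ := hc
    have h2 := hii _ _ hc
    have e : liftT u.length T (r, c) = sh u.length (T (ush u.length r, c)) := by
      unfold liftT; simp [hr]
    rw [e]
    calc r = sh u.length (ush u.length r) := (sh_ush hr).symm
      _ ≤ _ := sh_le_sh h2
  · -- condition (iii)
    intro r c r' c' hc he hcc
    have hc' : liftT u.length T (r', c') ≠ 0 := by rw [← he]; exact hc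
    rw [liftT_ne_zero] at hc hc'
    obtain ⟨hr, hc⟩ := hc
    obtain ⟨hr', hc'⟩ := hc'
    have e : sh u.length (T (ush u.length r, c)) = sh u.length (T (ush u.length r', c')) := by
      unfold liftT at he; rw [if_neg hr, if_neg hr'] at he; exact he
    have h3 := hiii _ _ _ _ hc (sh_inj e) hcc
    calc r' = sh u.length (ush u.length r') := (sh_ush hr').symm
      _ ≤ sh u.length (ush u.length r) := sh_le_sh h3
      _ = r := sh_ush hr
  · -- condition (iv)
    intro r r' c hc hc' hlt hrr
    have hcz := hc; have hcz' := hc'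
    rw [liftT_ne_zero] at hcz hcz'
    obtain ⟨hr, hc0⟩ := hcz
    obtain ⟨hr', hc0'⟩ := hcz'
    have e : liftT u.length T (r, c) = sh u.length (T (ush u.length r, c)) := by
      unfold liftT; simp [hr]
    have e' : liftT u.length T (r', c) = sh u.length (T (ush u.length r', c)) := by
      unfold liftT; simp [hr']
    rw [e, e'] at hlt
    have hlt2 : T (ush u.length r, c) < T (ush u.length r', c) := sh_lt_sh.mp hlt
    have hrr2 : ush u.length r' < ush u.length r := by
      rw [← sh_lt_sh (k := u.length), sh_ush hr', sh_ush hr]; exact hrr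
    obtain ⟨r'', hr''1, hr''2⟩ := hiv _ _ _ hc0 hc0' hlt2 hrr2
    refine ⟨sh u.length r'', ?_, ?_⟩
    · calc r' = sh u.length (ush u.length r') := (sh_ush hr').symm
        _ < sh u.length r'' := sh_lt_sh.mpr hr''1
    · rw [liftT_sh, hr''2, e]

lemma lift_wt (T₁ T₂ : ℕ × ℕ → ℕ) (h : wtList (u ++ v) T₁ = wtList (u ++ v) T₂) :
    wtList (u ++ 0 :: v) (liftT u.length T₁) = wtList (u ++ 0 :: v) (liftT u.length T₂) := by
  rw [wt_eq_iff] at h ⊢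
  intro j hj
  rw [len_ins] at hj
  by_cases hjk : j = u.length
  · subst hjk
    have z : ∀ T : ℕ × ℕ → ℕ, ((Finset.Icc 1 (u ++ 0 :: v).sum).filter
        fun c => liftT u.length T (u.length + 1, c) ≠ 0).card = 0 := by
      intro T
      rw [Finset.card_eq_zero, Finset.filter_eq_empty_iff]
      intro c _
      simp [liftT]
    rw [z T₁, z T₂]
  · have hne2 : j + 1 ≠ u.length + 1 := by omega
    have h1i : 1 ≤ ush u.length (j + 1) := ush_pos (by omega) hne2
    have hilen : ush u.length (j + 1) - 1 < (u ++ v).length := by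
      unfold ush
      simp only [List.length_append] at hj ⊢
      split <;> omega
    have hcomp := h (ush u.length (j + 1) - 1) hilen
    rw [show ush u.length (j + 1) - 1 + 1 = ush u.length (j + 1) by omega] at hcomp
    have hp : ∀ T : ℕ × ℕ → ℕ,
        ((Finset.Icc 1 (u ++ 0 :: v).sum).filter fun c => liftT u.length T (j + 1, c) ≠ 0).card
        = ((Finset.Icc 1 (u ++ v).sum).filter
            fun c => T (ush u.length (j + 1), c) ≠ 0).card := by
      intro T
      rw [sum_ins]
      refine congrArg Finset.card ?_
      apply Finset.filter_congr
      intro c _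
      simp only [ne_eq, eq_iff_iff]
      rw [not_iff_not]
      simp [liftT, hne2, sh_eq_zero, hjk]
    rw [hp T₁, hp T₂]
    exact hcomp

end Lift

lemma flatten_ins (u v : List ℕ) : Flatten (u ++ 0 :: v) = Flatten (u ++ v) := by
  simp [Flatten, List.filter_append]

lemma key (n : ℕ) : ∀ a : List ℕ, a.count 0 = n → GoodHyp (Flatten a) → GoodHyp a := by
  induction n with
  | zero =>
    intro a h hg
    have e : Flatten a = a := by
      rw [Flatten, List.filter_eq_self]
      intro x hx
      simp only [bne_iff_ne, ne_eq]
      rintro rfl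
      exact (List.count_eq_zero.mp h) hx
    rwa [e] at hg
  | succ n ih =>
    intro a h hg
    have hmem : (0 : ℕ) ∈ a := by
      rw [← List.count_pos_iff]
      omega
    obtain ⟨u, v, rfl⟩ := List.append_of_mem hmem
    have hcount : (u ++ v).count 0 = n := by
      rw [List.count_append] at h ⊢
      rw [List.count_cons] at h
      simp at h
      omega
    have hg' : GoodHyp (Flatten (u ++ v)) := by rwa [flatten_ins] at hg
    obtain ⟨T₁, T₂, ⟨hK₁, hG₁⟩, ⟨hK₂, hG₂⟩, hne, hwt⟩ := ih (u ++ v) hcount hg'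
    exact ⟨liftT u.length T₁, liftT u.length T₂,
      ⟨lift_kohnert u v T₁ hK₁, lift_rowGood u.length T₁ hG₁⟩,
      ⟨lift_kohnert u v T₂ hK₂, lift_rowGood u.length T₂ hG₂⟩,
      fun hh => hne (lift_inj u.length hh),
      lift_wt u v T₁ T₂ hwt⟩

end S18

/-- if `κ_α` is not multiplicity free for a strong composition `α`,
then `κ_a` is not multiplicity free for any weak composition `a` with `flat(a) = α`. -/
theorem stmt18 (α : List ℕ) (hpos : ∀ x ∈ α, 0 < x)
    (h : ∃ T₁ T₂ : ℕ × ℕ → ℕ, IsQYKohnert α T₁ ∧ IsQYKohnert α T₂ ∧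
      T₁ ≠ T₂ ∧ wtList α T₁ = wtList α T₂)
    (a : List ℕ) (ha : Flatten a = α) :
    ∃ T₁ T₂ : ℕ × ℕ → ℕ, IsQYKohnert a T₁ ∧ IsQYKohnert a T₂ ∧
      T₁ ≠ T₂ ∧ wtList a T₁ = wtList a T₂ := by
  obtain ⟨T₁, T₂, hQ₁, hQ₂, hne, hwt⟩ := h
  have hg : S18.GoodHyp α :=
    ⟨T₁, T₂, ⟨hQ₁.1, S18.rowGood_of_strong α hpos T₁ hQ₁.1⟩,
      ⟨hQ₂.1, S18.rowGood_of_strong α hpos T₂ hQ₂.1⟩, hne, hwt⟩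
  obtain ⟨S₁, S₂, ⟨hK₁, hG₁⟩, ⟨hK₂, hG₂⟩, hne', hwt'⟩ :=
    S18.key (a.count 0) a rfl (by rwa [ha])
  exact ⟨S₁, S₂, ⟨hK₁, fun r hr hex => Or.inl (hG₁ r hr hex)⟩,
    ⟨hK₂, fun r hr hex => Or.inl (hG₂ r hr hex)⟩, hne', hwt'⟩
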